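/- For any two pure states |ψ⟩, |φ⟩ in a finite-dimensional Hilbert space and any Hermitian operator H, the difference of pure-state quantum Fisher informations F_Q[|ψ⟩;H] := 4(⟨ψ|H²|ψ⟩ − ⟨ψ|H|ψ⟩²) satisfies |F_Q[|ψ⟩;H] − F_Q[|φ⟩;H]| ≤ 12·‖|ψ⟩⟨ψ| − |φ⟩⟨φ|‖₁·‖H‖². -/

import Mathlib

open scoped BigOperators ComplexConjugate ComplexOrder Matrix

noncomputable section
open Matrix

/-- The rank-one projector `|ψ⟩⟨ψ|` as a matrix. -/
def projv {ι : Type*} [Fintype ι] (ψ : ι → ℂ) : Matrix ι ι ℂ :=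
  Matrix.vecMulVec ψ (star ψ)

/-- The inner product `⟨ψ|φ⟩`. -/
def ipc {ι : Type*} [Fintype ι] (ψ φ : ι → ℂ) : ℂ :=
  dotProduct (star ψ) φ

-- Square root of a positive semidefinite matrix (junk value `0` otherwise).
open Classical in
def msqrt {ι : Type*} [Fintype ι] [DecidableEq ι] (A : Matrix ι ι ℂ) : Matrix ι ι ℂ :=
  if h : A.PosSemidef then
    h.1.eigenvectorUnitary.1 * Matrix.diagonal ((↑) ∘ (√·) ∘ h.1.eigenvalues) *
      (star h.1.eigenvectorUnitary : Matrix ι ι ℂ) else 0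

/-- Trace norm `‖X‖₁ = Tr √(X†X)`. -/
def traceNorm {ι : Type*} [Fintype ι] [DecidableEq ι] (A : Matrix ι ι ℂ) : ℝ :=
  (msqrt (Aᴴ * A)).trace.re

/-- Uhlmann fidelity `F(ρ,σ) = Tr √(√σ ρ √σ)`. -/
def fid {ι : Type*} [Fintype ι] [DecidableEq ι] (ρ σ : Matrix ι ι ℂ) : ℝ :=
  (msqrt (msqrt σ * ρ * msqrt σ)).trace.re

/-- Operator (spectral) norm of a matrix. -/
def opNorm {ι : Type*} [Fintype ι] [DecidableEq ι] (A : Matrix ι ι ℂ) : ℝ :=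
  ‖Matrix.toEuclideanCLM (𝕜 := ℂ) A‖

/-- Expectation value `⟨ψ|H|ψ⟩` (real part). -/
def exval {ι : Type*} [Fintype ι] (ψ : ι → ℂ) (H : Matrix ι ι ℂ) : ℝ :=
  (ipc ψ (H.mulVec ψ)).re

/-- Pure-state quantum Fisher information `4(⟨H²⟩ - ⟨H⟩²)`. -/
def QFIpure {ι : Type*} [Fintype ι] (ψ : ι → ℂ) (H : Matrix ι ι ℂ) : ℝ :=
  4 * (exval ψ (H * H) - (exval ψ H) ^ 2)

/-- Density matrix predicate. -/
def IsDensity {ι : Type*} [Fintype ι] [DecidableEq ι] (ρ : Matrix ι ι ℂ) : Prop :=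
  ρ.PosSemidef ∧ ρ.trace = 1

variable {n : ℕ}

lemma quad_norm_le (B : Matrix (Fin n) (Fin n) ℂ) (u : Fin n → ℂ)
    (hu : dotProduct (star u) u = 1) :
    ‖dotProduct (star u) (B.mulVec u)‖ ≤ opNorm B := by
  set x : EuclideanSpace ℂ (Fin n) := (WithLp.equiv 2 _).symm u
  have hx : ‖x‖ = 1 := by
    have h2 : (inner (𝕜 := ℂ) x x) = dotProduct (star u) u := by
      rw [EuclideanSpace.inner_eq_star_dotProduct]
      simp [dotProduct, x, mul_comm]
    have := inner_self_eq_norm_sq (𝕜 := ℂ) x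
    rw [h2, hu] at this
    simp only [RCLike.one_re] at this
    nlinarith [norm_nonneg x]
  have h1 : dotProduct (star u) (B.mulVec u) =
      inner (𝕜 := ℂ) x (Matrix.toEuclideanCLM (𝕜 := ℂ) B x) := by
    rw [show x = WithLp.toLp 2 u from rfl, Matrix.toEuclideanCLM_toLp]
    simp [EuclideanSpace.inner_eq_star_dotProduct, dotProduct, x, mul_comm,
      Matrix.toLin'_apply]
  rw [h1]
  calc ‖inner (𝕜 := ℂ) x (Matrix.toEuclideanCLM (𝕜 := ℂ) B x)‖
      ≤ ‖x‖ * ‖Matrix.toEuclideanCLM (𝕜 := ℂ) B x‖ := norm_inner_le_norm _ _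
    _ = ‖Matrix.toEuclideanCLM (𝕜 := ℂ) B x‖ := by rw [hx, one_mul]
    _ ≤ ‖Matrix.toEuclideanCLM (𝕜 := ℂ) B‖ * ‖x‖ := (Matrix.toEuclideanCLM (𝕜 := ℂ) B).le_opNorm x
    _ = opNorm B := by rw [hx, mul_one]; rfl

lemma trace_proj_mul (ψ : Fin n → ℂ) (B : Matrix (Fin n) (Fin n) ℂ) :
    (projv ψ * B).trace = ipc ψ (B.mulVec ψ) := by
  simp only [projv, ipc, Matrix.trace, Matrix.diag, Matrix.mul_apply,
    Matrix.vecMulVec_apply, dotProduct, Matrix.mulVec, Pi.star_apply]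
  rw [Finset.sum_comm]
  congr 1; ext j
  rw [Finset.mul_sum]
  congr 1; ext i
  ring

lemma opNorm_mul_le (A B : Matrix (Fin n) (Fin n) ℂ) :
    opNorm (A * B) ≤ opNorm A * opNorm B := by
  simp only [opNorm, _root_.map_mul]
  exact norm_mul_le _ _

lemma star_coe_unitary (U : Matrix.unitaryGroup (Fin n) ℂ) :
    (star (U : Matrix (Fin n) (Fin n) ℂ)) * U = 1 := by
  exact Unitary.coe_star_mul_self U

lemma coe_unitary_star (U : Matrix.unitaryGroup (Fin n) ℂ) :
    (U : Matrix (Fin n) (Fin n) ℂ) * star (U : Matrix (Fin n) (Fin n) ℂ) = 1 := by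
  exact Unitary.coe_mul_star_self U

open scoped MatrixOrder in
lemma msqrt_eq_cfc (A : Matrix (Fin n) (Fin n) ℂ) (hA : A.PosSemidef) :
    msqrt A = CFC.sqrt A := by
  rw [msqrt, dif_pos hA, CFC.sqrt_eq_cfc, cfc_nnreal_eq_real _ A hA.nonneg, hA.1.cfc_eq]
  simp only [Matrix.IsHermitian.cfc, Unitary.conjStarAlgAut_apply, Unitary.coe_star]
  congr 3
  funext i
  simp [hA.eigenvalues_nonneg i]

open scoped MatrixOrder in
lemma traceNorm_eq_sum_abs_eigen (Δ : Matrix (Fin n) (Fin n) ℂ) (hΔ : Δ.IsHermitian) :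
    traceNorm Δ = ∑ i, |hΔ.eigenvalues i| := by
  have hPSD : (Δᴴ * Δ).PosSemidef := Matrix.posSemidef_conjTranspose_mul_self Δ
  set U : Matrix (Fin n) (Fin n) ℂ := (hΔ.eigenvectorUnitary : Matrix (Fin n) (Fin n) ℂ) with hU
  set lam := hΔ.eigenvalues
  set S : Matrix (Fin n) (Fin n) ℂ :=
    U * Matrix.diagonal (fun i => ((|lam i| : ℝ) : ℂ)) * Uᴴ with hSdef
  have hUs : star U * U = 1 := star_coe_unitary hΔ.eigenvectorUnitary
  have hS : S.PosSemidef := by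
    refine Matrix.PosSemidef.mul_mul_conjTranspose_same ?_ U
    refine Matrix.posSemidef_diagonal_iff.mpr fun i => ?_
    rw [RCLike.nonneg_iff]
    simp [abs_nonneg]
  have hspec := hΔ.spectral_theorem
  have hS2 : S ^ 2 = Δᴴ * Δ := by
    rw [hΔ.eq]
    rw [pow_two, hSdef]
    calc U * Matrix.diagonal (fun i => ((|lam i| : ℝ) : ℂ)) * Uᴴ *
          (U * Matrix.diagonal (fun i => ((|lam i| : ℝ) : ℂ)) * Uᴴ)
        = U * (Matrix.diagonal (fun i => ((|lam i| : ℝ) : ℂ)) *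
            ((Uᴴ * U) * Matrix.diagonal (fun i => ((|lam i| : ℝ) : ℂ)))) * Uᴴ := by
          simp only [Matrix.mul_assoc]
      _ = U * Matrix.diagonal (fun i => ((lam i : ℝ) : ℂ) * ((lam i : ℝ) : ℂ)) * Uᴴ := by
          rw [← Matrix.star_eq_conjTranspose U, hUs, Matrix.one_mul,
            Matrix.diagonal_mul_diagonal]
          congr 2
          funext i
          simp only [← Complex.ofReal_mul, abs_mul_abs_self]
      _ = Δ * Δ := by
          conv_rhs => rw [hspec, Unitary.conjStarAlgAut_apply, ← hU]
          rw [← Matrix.star_eq_conjTranspose U] at *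
          calc U * Matrix.diagonal (fun i => ((lam i : ℝ) : ℂ) * ((lam i : ℝ) : ℂ)) * star U
              = U * (Matrix.diagonal (RCLike.ofReal ∘ lam) *
                ((star U * U) * Matrix.diagonal (RCLike.ofReal ∘ lam))) * star U := by
                rw [hUs, Matrix.one_mul, Matrix.diagonal_mul_diagonal]
                rfl
            _ = _ := by simp only [Matrix.mul_assoc]; rfl
  have hSsq : S = CFC.sqrt (Δᴴ * Δ) :=
    (CFC.sqrt_unique ((pow_two S).symm.trans hS2) hS.nonneg).symm
  have hmsqrt : msqrt (Δᴴ * Δ) = S := by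
    rw [msqrt_eq_cfc _ hPSD, hSsq]
  rw [traceNorm, hmsqrt, hSdef]
  rw [Matrix.trace_mul_cycle, ← Matrix.star_eq_conjTranspose U, hUs,
    Matrix.one_mul, Matrix.trace_diagonal]
  simp

lemma trace_mul_le (Δ : Matrix (Fin n) (Fin n) ℂ) (hΔ : Δ.IsHermitian) (B : Matrix (Fin n) (Fin n) ℂ) :
    ‖(Δ * B).trace‖ ≤ traceNorm Δ * opNorm B := by
  set U : Matrix (Fin n) (Fin n) ℂ := (hΔ.eigenvectorUnitary : Matrix (Fin n) (Fin n) ℂ) with hU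
  set lam := hΔ.eigenvalues
  have hUs : star U * U = 1 := star_coe_unitary hΔ.eigenvectorUnitary
  have htr : (Δ * B).trace = ∑ i, ((lam i : ℝ) : ℂ) *
      dotProduct (star (fun j => U j i)) (B.mulVec (fun j => U j i)) := by
    conv_lhs => rw [hΔ.spectral_theorem, Unitary.conjStarAlgAut_apply]
    rw [← hU]
    rw [Matrix.mul_assoc, Matrix.trace_mul_comm, ← Matrix.mul_assoc]
    have hX : ∀ (X : Matrix (Fin n) (Fin n) ℂ),
        (X * Matrix.diagonal (RCLike.ofReal ∘ lam)).trace = ∑ i, X i i * ((lam i : ℝ) : ℂ) := by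
      intro X
      simp [Matrix.trace, Matrix.mul_diagonal, Function.comp]
    rw [hX]
    refine Finset.sum_congr rfl fun i _ => ?_
    rw [mul_comm]
    congr 1
    simp only [Matrix.mul_apply, dotProduct, Matrix.mulVec, Pi.star_apply,
      Matrix.star_apply, RCLike.star_def]
    simp only [Finset.sum_mul, Finset.mul_sum]
    rw [Finset.sum_comm]
    exact Finset.sum_congr rfl fun a _ => Finset.sum_congr rfl fun b _ => by ring
  have hunit : ∀ i, dotProduct (star (fun j => U j i)) (fun j => U j i) = 1 := by
    intro i
    have := congrFun (congrFun hUs i) i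
    simp only [Matrix.mul_apply, Matrix.one_apply_eq] at this
    rw [← this]
    simp [dotProduct, Matrix.star_apply, RCLike.star_def]
  rw [htr, traceNorm_eq_sum_abs_eigen Δ hΔ, Finset.sum_mul]
  refine (norm_sum_le _ _).trans ?_
  refine Finset.sum_le_sum fun i _ => ?_
  rw [norm_mul]
  have h1 : ‖((lam i : ℝ) : ℂ)‖ = |lam i| := by
    simp [Complex.norm_real]
  rw [h1]
  exact mul_le_mul_of_nonneg_left (quad_norm_le B _ (hunit i)) (abs_nonneg _)

lemma projv_isHermitian (ψ : Fin n → ℂ) : (projv ψ).IsHermitian := by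
  ext i j
  simp [projv, Matrix.conjTranspose_apply, Matrix.vecMulVec_apply, mul_comm]

/-- continuity of the pure-state QFI in trace norm:
`|F_Q[ψ;H] − F_Q[φ;H]| ≤ 12 ‖ψ−φ‖₁ ‖H‖²`. -/
theorem QFIpure_continuity_traceNorm {n : ℕ} (ψ φ : Fin n → ℂ)
    (hψ : ipc ψ ψ = 1) (hφ : ipc φ φ = 1)
    (H : Matrix (Fin n) (Fin n) ℂ) (hH : H.IsHermitian) :
    |QFIpure ψ H - QFIpure φ H| ≤ 12 * traceNorm (projv ψ - projv φ) * opNorm H ^ 2 := by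
  set Δ := projv ψ - projv φ with hΔdef
  have hΔ : Δ.IsHermitian := (projv_isHermitian ψ).sub (projv_isHermitian φ)
  set T := traceNorm Δ with hT
  set N := opNorm H with hN
  have hT0 : 0 ≤ T := by
    rw [hT, traceNorm_eq_sum_abs_eigen Δ hΔ]
    exact Finset.sum_nonneg fun i _ => abs_nonneg _
  have hN0 : 0 ≤ N := norm_nonneg _
  have hdiff : ∀ B : Matrix (Fin n) (Fin n) ℂ,
      exval ψ B - exval φ B = ((Δ * B).trace).re := by
    intro B
    rw [hΔdef, Matrix.sub_mul, Matrix.trace_sub, Complex.sub_re]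
    rw [trace_proj_mul, trace_proj_mul]
    rfl
  have hbound : ∀ B : Matrix (Fin n) (Fin n) ℂ,
      |exval ψ B - exval φ B| ≤ T * opNorm B := by
    intro B
    rw [hdiff B]
    refine (Complex.abs_re_le_norm _).trans ?_
    exact trace_mul_le Δ hΔ B
  have h2 : |exval ψ (H * H) - exval φ (H * H)| ≤ T * N ^ 2 := by
    refine (hbound (H * H)).trans ?_
    have := opNorm_mul_le H H
    nlinarith
  have h1 : |exval ψ H - exval φ H| ≤ T * N := hbound H
  have ha : |exval ψ H| ≤ N := by
    refine (Complex.abs_re_le_norm _).trans (quad_norm_le H ψ hψ)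
  have hb : |exval φ H| ≤ N := by
    refine (Complex.abs_re_le_norm _).trans (quad_norm_le H φ hφ)
  have key : |QFIpure ψ H - QFIpure φ H| ≤ 4 * (T * N ^ 2) + 4 * ((2 * N) * (T * N)) := by
    have expand : QFIpure ψ H - QFIpure φ H =
        4 * (exval ψ (H * H) - exval φ (H * H)) -
        4 * ((exval ψ H + exval φ H) * (exval ψ H - exval φ H)) := by
      simp only [QFIpure]; ring
    rw [expand]
    refine (abs_sub _ _).trans ?_
    have e1 : |4 * (exval ψ (H * H) - exval φ (H * H))| ≤ 4 * (T * N ^ 2) := by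
      rw [abs_mul]; simp only [abs_of_nonneg (by norm_num : (0:ℝ) ≤ 4)]
      linarith [h2]
    have e2 : |4 * ((exval ψ H + exval φ H) * (exval ψ H - exval φ H))| ≤
        4 * ((2 * N) * (T * N)) := by
      rw [abs_mul, abs_mul]
      have hab : |exval ψ H + exval φ H| ≤ 2 * N := by
        calc |exval ψ H + exval φ H| ≤ |exval ψ H| + |exval φ H| := abs_add_le _ _
          _ ≤ 2 * N := by linarith
      have := mul_le_mul hab h1 (abs_nonneg _) (by linarith)
      simp only [abs_of_nonneg (by norm_num : (0:ℝ) ≤ 4)]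
      nlinarith [abs_nonneg (exval ψ H - exval φ H)]
    linarith
  calc |QFIpure ψ H - QFIpure φ H| ≤ 4 * (T * N ^ 2) + 4 * ((2 * N) * (T * N)) := key
    _ = 12 * T * N ^ 2 := by ring
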